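/- For XP operators A₁ = XP_N(p₁|x₁|z₁) and A₂ = XP_N(p₂|x₂|z₂) with x₁ and x₂ binary, the group commutator satisfies A₁ * A₂ * A₁⁻¹ * A₂⁻¹ = D_N(2•(x₁*z₂) − 2•(x₂*z₁) + 4•(x₁*x₂*z₁) − 4•(x₁*x₂*z₂)), where all vector products are componentwise; in particular the group commutator of any two XP operators is a diagonal XP operator. -/

import Mathlib

open Matrix

/-- `ω = exp(πi/N)`. -/
noncomputable def omN (N : ℕ) : ℂ := Complex.exp (Real.pi * Complex.I / N)

/-- The Pauli X matrix. -/
def Xm : Matrix (Fin 2) (Fin 2) ℂ := !![0, 1; 1, 0]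

/-- The precision-`N` phase matrix `P = diag(1, ω²)`. -/
noncomputable def Pm (N : ℕ) : Matrix (Fin 2) (Fin 2) ℂ := !![1, 0; 0, (omN N) ^ 2]

/-- The precision-`N` XP operator `XP_N(p|x|z)` on `n` qubits, the matrix indexed by bit
strings whose `(f, e)` entry is `ω^p * ∏ i, (X^(x i) * P^(z i)) (f i) (e i)`. -/
noncomputable def XP (N n : ℕ) (p : ℤ) (x z : Fin n → ℤ) :
    Matrix (Fin n → Fin 2) (Fin n → Fin 2) ℂ :=
  Matrix.of fun f e => (omN N) ^ p * ∏ i, ((Xm ^ (x i)) * (Pm N) ^ (z i)) (f i) (e i)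

/-- The antisymmetric operator `D_N(z) = XP_N(∑ i, z i | 0 | -z)`. -/
noncomputable def DN (N n : ℕ) (z : Fin n → ℤ) :
    Matrix (Fin n → Fin 2) (Fin n → Fin 2) ℂ :=
  XP N n (∑ i, z i) 0 (-z)

/-- A vector is binary if every entry is 0 or 1. -/
def IsBinary {n : ℕ} (x : Fin n → ℤ) : Prop := ∀ i, x i = 0 ∨ x i = 1

/-! ### Auxiliary lemmas -/

lemma omN_ne_zero (N : ℕ) : omN N ≠ 0 := Complex.exp_ne_zero _

lemma Pm_det (N : ℕ) : IsUnit (Pm N).det := by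
  simp [Pm, Matrix.det_fin_two_of, isUnit_iff_ne_zero, omN_ne_zero]

lemma Pm_zpow (N : ℕ) (z : ℤ) : (Pm N) ^ z = !![1, 0; 0, (omN N) ^ (2 * z)] := by
  have hω := omN_ne_zero N
  induction z using Int.induction_on with
  | zero => ext i j; rw [zpow_zero]; fin_cases i <;> fin_cases j <;> simp
  | succ k ih =>
      rw [Matrix.zpow_add_one (Pm_det N), ih, Pm]
      ext i j; fin_cases i <;> fin_cases j <;>
        simp [Matrix.mul_fin_two, ← _root_.zpow_neg,
          ← zpow_add₀ hω] <;>
        rw [← zpow_natCast (omN N) 2, ← zpow_add₀ hω] <;>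
        (try (congr 1 <;> push_cast <;> ring))
  | pred k ih =>
      rw [Matrix.zpow_sub_one (Pm_det N), ih]
      have hPinv : (Pm N)⁻¹ = !![1, 0; 0, (omN N) ^ (-2 : ℤ)] := by
        apply Matrix.inv_eq_left_inv
        ext i j; fin_cases i <;> fin_cases j <;>
          simp [Pm, Matrix.mul_fin_two, ← _root_.zpow_neg,
            ← zpow_add₀ hω]
        rw [← zpow_natCast (omN N) 2, ← zpow_add₀ hω]; norm_num
      rw [hPinv]
      ext i j; fin_cases i <;> fin_cases j <;>
        simp [Matrix.mul_fin_two, ← zpow_natCast (omN N), ← _root_.zpow_neg,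
          ← zpow_add₀ hω] <;>
        (try (congr 1 <;> push_cast <;> ring))

/-- `X^x P^{2xz-z} X^x P^z = ω^{2xz} • 1` for binary `x`. -/
lemma keyinv (N : ℕ) (x z : ℤ) (hx : x = 0 ∨ x = 1) :
    (Xm ^ x * Pm N ^ (2 * x * z - z)) * (Xm ^ x * Pm N ^ z) =
      (omN N) ^ (2 * x * z) • (1 : Matrix (Fin 2) (Fin 2) ℂ) := by
  have hω := omN_ne_zero N
  rcases hx with h | h <;> subst h <;>
    (ext i j; fin_cases i <;> fin_cases j <;>
      simp [Xm, Pm_zpow, Matrix.mul_fin_two, Matrix.smul_apply, Matrix.one_apply, smul_eq_mul,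
        zpow_zero, zpow_one, ← _root_.zpow_neg, ← zpow_add₀ hω] <;>
      first
        | rfl
        | (congr 1 <;> push_cast <;> ring)
        | (rw [← zpow_zero (omN N)]; congr 1 <;> ring)
        | (symm; rw [← zpow_zero (omN N)]; congr 1 <;> ring))

/-- The single-qubit commutator computation. -/
lemma key (N : ℕ) (x₁ x₂ z₁ z₂ : ℤ) (h₁ : x₁ = 0 ∨ x₁ = 1) (h₂ : x₂ = 0 ∨ x₂ = 1) :
    (Xm ^ x₁ * Pm N ^ z₁) * (Xm ^ x₂ * Pm N ^ z₂) * (Xm ^ x₁ * Pm N ^ (2 * x₁ * z₁ - z₁)) *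
        (Xm ^ x₂ * Pm N ^ (2 * x₂ * z₂ - z₂)) =
      (omN N) ^ (2 * x₁ * z₁ + 2 * x₂ * z₂ +
          (2 * x₁ * z₂ - 2 * x₂ * z₁ + 4 * x₁ * x₂ * z₁ - 4 * x₁ * x₂ * z₂)) •
        (Xm ^ (0 : ℤ) *
          Pm N ^ (-(2 * x₁ * z₂ - 2 * x₂ * z₁ + 4 * x₁ * x₂ * z₁ - 4 * x₁ * x₂ * z₂))) := by
  have hω := omN_ne_zero N
  rcases h₁ with h | h <;> rcases h₂ with h' | h' <;> subst h <;> subst h' <;>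
    (ext i j; fin_cases i <;> fin_cases j <;>
      simp [Xm, Pm_zpow, Matrix.mul_fin_two, Matrix.smul_apply, Matrix.one_apply, smul_eq_mul,
        zpow_zero, zpow_one, ← _root_.zpow_neg, ← zpow_add₀ hω] <;>
      first
        | rfl
        | (congr 1 <;> push_cast <;> ring)
        | (rw [← zpow_zero (omN N)]; congr 1 <;> ring)
        | (symm; rw [← zpow_zero (omN N)]; congr 1 <;> ring))

/-- The `n`-fold tensor (Kronecker) product, entrywise. -/
noncomputable def Tn (n : ℕ) (M : Fin n → Matrix (Fin 2) (Fin 2) ℂ) :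
    Matrix (Fin n → Fin 2) (Fin n → Fin 2) ℂ :=
  Matrix.of fun f e => ∏ i, M i (f i) (e i)

lemma Tn_mul (n : ℕ) (M M' : Fin n → Matrix (Fin 2) (Fin 2) ℂ) :
    Tn n M * Tn n M' = Tn n (fun i => M i * M' i) := by
  ext f e
  simp only [Tn, Matrix.mul_apply, Matrix.of_apply]
  simp_rw [← Finset.prod_mul_distrib]
  rw [Finset.prod_univ_sum, Fintype.piFinset_univ]

lemma Tn_smul (n : ℕ) (c : Fin n → ℂ) (M : Fin n → Matrix (Fin 2) (Fin 2) ℂ) :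
    Tn n (fun i => c i • M i) = (∏ i, c i) • Tn n M := by
  ext f e
  simp [Tn, Finset.prod_mul_distrib]

lemma Tn_one (n : ℕ) : Tn n (fun _ => (1 : Matrix (Fin 2) (Fin 2) ℂ)) = 1 := by
  ext f e
  simp only [Tn, Matrix.of_apply, Matrix.one_apply]
  by_cases h : f = e
  · subst h; simp
  · rw [if_neg h]
    obtain ⟨i, hi⟩ := Function.ne_iff.mp h
    exact Finset.prod_eq_zero (Finset.mem_univ i) (by simp [hi])

lemma XP_eq (N n : ℕ) (p : ℤ) (x z : Fin n → ℤ) :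
    XP N n p x z = (omN N) ^ p • Tn n (fun i => Xm ^ (x i) * Pm N ^ (z i)) := by
  ext f e
  simp [XP, Tn, smul_eq_mul]

lemma prod_zpow_sum {ι : Type*} (s : Finset ι) (a : ℂ) (ha : a ≠ 0) (c : ι → ℤ) :
    ∏ i ∈ s, a ^ c i = a ^ (∑ i ∈ s, c i) := by
  induction s using Finset.cons_induction with
  | empty => simp
  | cons i s hi ih => simp [Finset.prod_cons, Finset.sum_cons, ih, zpow_add₀ ha]

/-- Explicit inverse of an XP operator with binary `x`-part. -/
lemma XP_inv (N n : ℕ) (p : ℤ) (x z : Fin n → ℤ) (hx : IsBinary x) :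
    (XP N n p x z)⁻¹ =
      XP N n (-p - 2 * ∑ i, x i * z i) x (fun i => 2 * x i * z i - z i) := by
  have hω := omN_ne_zero N
  apply Matrix.inv_eq_left_inv
  rw [XP_eq, XP_eq, smul_mul_smul_comm, Tn_mul]
  have hf : (fun i => (Xm ^ (x i) * Pm N ^ (2 * x i * z i - z i)) * (Xm ^ (x i) * Pm N ^ (z i)))
      = fun i => (omN N) ^ (2 * x i * z i) • (1 : Matrix (Fin 2) (Fin 2) ℂ) :=
    funext fun i => keyinv N (x i) (z i) (hx i)
  rw [hf, Tn_smul, Tn_one, smul_smul, prod_zpow_sum _ _ hω, ← zpow_add₀ hω, ← zpow_add₀ hω]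
  have : -p - 2 * ∑ i, x i * z i + p + ∑ i, 2 * x i * z i = 0 := by
    rw [Finset.mul_sum]
    rw [show (∑ i, 2 * (x i * z i)) = ∑ i, 2 * x i * z i from by
      refine Finset.sum_congr rfl fun i _ => by ring]
    ring
  rw [this, zpow_zero, one_smul]

/-- **Commutator rule for XP operators** (COMM):
`A₁ A₂ A₁⁻¹ A₂⁻¹ = D_N(2 x₁ z₂ − 2 x₂ z₁ + 4 x₁ x₂ z₁ − 4 x₁ x₂ z₂)`; in particular the group
commutator of any two XP operators is a diagonal XP operator. -/
theorem XP_comm (N n : ℕ) (hN : 2 ≤ N) (hn : 1 ≤ n) (p₁ p₂ : ℤ) (x₁ x₂ z₁ z₂ : Fin n → ℤ)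
    (hx₁ : IsBinary x₁) (hx₂ : IsBinary x₂) :
    XP N n p₁ x₁ z₁ * XP N n p₂ x₂ z₂ * (XP N n p₁ x₁ z₁)⁻¹ * (XP N n p₂ x₂ z₂)⁻¹ =
      DN N n (2 • (x₁ * z₂) - 2 • (x₂ * z₁) + 4 • (x₁ * x₂ * z₁) - 4 • (x₁ * x₂ * z₂)) := by
  have hω := omN_ne_zero N
  set W : Fin n → ℤ := 2 • (x₁ * z₂) - 2 • (x₂ * z₁) + 4 • (x₁ * x₂ * z₁) - 4 • (x₁ * x₂ * z₂)
    with hWdef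
  have hW : ∀ i, W i = 2 * x₁ i * z₂ i - 2 * x₂ i * z₁ i + 4 * x₁ i * x₂ i * z₁ i
      - 4 * x₁ i * x₂ i * z₂ i := by
    intro i
    simp [hWdef, Pi.smul_apply, Pi.mul_apply, Pi.sub_apply, Pi.add_apply, smul_eq_mul]
    ring
  rw [XP_inv N n p₁ x₁ z₁ hx₁, XP_inv N n p₂ x₂ z₂ hx₂, DN]
  simp only [XP_eq, smul_mul_smul_comm, Tn_mul]
  have hfun : (fun i => Xm ^ x₁ i * Pm N ^ z₁ i * (Xm ^ x₂ i * Pm N ^ z₂ i) *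
        (Xm ^ x₁ i * Pm N ^ (2 * x₁ i * z₁ i - z₁ i)) *
        (Xm ^ x₂ i * Pm N ^ (2 * x₂ i * z₂ i - z₂ i)))
      = fun i => (omN N) ^ (2 * x₁ i * z₁ i + 2 * x₂ i * z₂ i +
          (2 * x₁ i * z₂ i - 2 * x₂ i * z₁ i + 4 * x₁ i * x₂ i * z₁ i
            - 4 * x₁ i * x₂ i * z₂ i)) •
        (Xm ^ (0 : ℤ) * Pm N ^ (-(2 * x₁ i * z₂ i - 2 * x₂ i * z₁ i + 4 * x₁ i * x₂ i * z₁ i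
            - 4 * x₁ i * x₂ i * z₂ i))) :=
    funext fun i => key N (x₁ i) (x₂ i) (z₁ i) (z₂ i) (hx₁ i) (hx₂ i)
  rw [hfun, Tn_smul, smul_smul, prod_zpow_sum _ _ hω]
  congr 1
  · rw [← zpow_add₀ hω, ← zpow_add₀ hω, ← zpow_add₀ hω, ← zpow_add₀ hω]
    congr 1
    have e₁ : (∑ i, (2 * x₁ i * z₁ i + 2 * x₂ i * z₂ i +
        (2 * x₁ i * z₂ i - 2 * x₂ i * z₁ i + 4 * x₁ i * x₂ i * z₁ i - 4 * x₁ i * x₂ i * z₂ i)))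
        = 2 * (∑ i, x₁ i * z₁ i) + 2 * (∑ i, x₂ i * z₂ i) + ∑ i, W i := by
      rw [Finset.mul_sum, Finset.mul_sum, ← Finset.sum_add_distrib, ← Finset.sum_add_distrib]
      refine Finset.sum_congr rfl fun i _ => by rw [hW i]; ring
    rw [e₁]
    ring
  · exact congrArg (Tn n) (funext fun i => by simp [hW i])
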